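/- For z = (z_1,…,z_h) ∈ ℂ^h let ω(z) = δ_0 + Σ_{i=1}^h z_i·δ_i ∈ ℂ^{2h+2}. Then the following are equivalent: (a) the number √−1·⟨ω(z), conj(ω(z))⟩ is a positive real number, and for every nonzero u in the ℂ-span of {δ_0, δ_1, …, δ_h} with ⟨u, conj(ω(z))⟩ = 0, the number √−1·⟨u, conj(u)⟩ is a negative real number; (b) Σ_{i=1}^h |z_i|² < 1. In other words, the locus where the Hodge–Riemann inequalities hold for this family is exactly the h-dimensional complex unit ball. -/

import Mathlib

/-- The symplectic form on `ℂ^{2h+2}` in the complex basis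
`ε_0, …, ε_h, δ_0, …, δ_h` (a vector is recorded as the pair of its `ε`-coordinates
and its `δ`-coordinates): `⟨ε_i, ε_j⟩ = ⟨δ_i, δ_j⟩ = 0`, `⟨ε_0, δ_0⟩ = 2√−1`, and
`⟨ε_i, δ_i⟩ = −2√−1` for `1 ≤ i ≤ h`. -/
noncomputable def symB {h : ℕ} (x y : (Fin (h+1) → ℂ) × (Fin (h+1) → ℂ)) : ℂ :=
  2 * Complex.I * (x.1 0 * y.2 0 - x.2 0 * y.1 0)
    - 2 * Complex.I *
        ∑ i : Fin h, (x.1 i.succ * y.2 i.succ - x.2 i.succ * y.1 i.succ)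

/-- The antilinear involution determined by `conj ε_i = δ_i`, `conj δ_i = ε_i`. -/
noncomputable def conjB {h : ℕ} (x : (Fin (h+1) → ℂ) × (Fin (h+1) → ℂ)) :
    (Fin (h+1) → ℂ) × (Fin (h+1) → ℂ) :=
  (fun j => starRingEnd ℂ (x.2 j), fun j => starRingEnd ℂ (x.1 j))

/-- The basis vector `δ_j`. -/
noncomputable def deltaVec {h : ℕ} (j : Fin (h+1)) :
    (Fin (h+1) → ℂ) × (Fin (h+1) → ℂ) :=
  (0, Pi.single j 1)

/-- `ω(z) = δ_0 + Σᵢ z_i·δ_i`. -/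
noncomputable def omB {h : ℕ} (z : Fin h → ℂ) :
    (Fin (h+1) → ℂ) × (Fin (h+1) → ℂ) :=
  (0, Fin.cons 1 z)

lemma omB_pair {h : ℕ} (z : Fin h → ℂ) :
    Complex.I * symB (omB z) (conjB (omB z))
      = ((2 - 2 * ∑ i, Complex.normSq (z i) : ℝ) : ℂ) := by
  simp only [symB, omB, conjB, Pi.zero_apply, Fin.cons_zero, Fin.cons_succ,
    map_zero, map_one, mul_zero, zero_mul, mul_one, one_mul, zero_sub, sub_zero,
    Complex.mul_conj, Finset.sum_neg_distrib]
  push_cast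
  linear_combination (-2 + 2 * ∑ i : Fin h, (Complex.normSq (z i) : ℂ)) * Complex.I_sq

/-- For the family `ω(z) = δ_0 + Σ z_i δ_i` (the case `Φ ≡ 0`), the Hodge–Riemann
inequalities hold at `z` if and only if `Σᵢ |z_i|² < 1`: the locus is the
`h`-dimensional complex unit ball. -/
theorem stmt14 {h : ℕ} (hh : 1 ≤ h) (z : Fin h → ℂ) :
    ((∃ r : ℝ, 0 < r ∧ Complex.I * symB (omB z) (conjB (omB z)) = (r : ℂ)) ∧
      (∀ u ∈ Submodule.span ℂ (Set.range (deltaVec (h := h))), u ≠ 0 →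
        symB u (conjB (omB z)) = 0 →
        ∃ r : ℝ, r < 0 ∧ Complex.I * symB u (conjB u) = (r : ℂ))) ↔
      ∑ i, Complex.normSq (z i) < 1 := by
  constructor
  · rintro ⟨⟨r, hr, hrel⟩, -⟩
    rw [omB_pair] at hrel
    have : (2 - 2 * ∑ i, Complex.normSq (z i) : ℝ) = r := by exact_mod_cast hrel
    linarith
  · intro hS
    refine ⟨⟨2 - 2 * ∑ i, Complex.normSq (z i), by linarith, omB_pair z⟩, ?_⟩
    intro u hu hu0 hperp
    have h1 : u.1 = 0 := by
      have hle : Submodule.span ℂ (Set.range (deltaVec (h := h)))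
          ≤ (⊥ : Submodule ℂ (Fin (h+1) → ℂ)).prod ⊤ := by
        rw [Submodule.span_le]
        rintro _ ⟨j, rfl⟩
        exact ⟨rfl, trivial⟩
      exact (hle hu).1
    have hperp' : u.2 0 = ∑ i : Fin h, u.2 i.succ * (starRingEnd ℂ) (z i) := by
      simp only [symB, conjB, omB, h1, Pi.zero_apply, map_zero, map_one,
        Fin.cons_zero, Fin.cons_succ, mul_zero, zero_mul, mul_one, zero_sub,
        Finset.sum_neg_distrib] at hperp
      linear_combination (Complex.I / 2) * hperp
        + (u.2 0 - ∑ i : Fin h, u.2 i.succ * (starRingEnd ℂ) (z i)) * Complex.I_sq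
    have hself : Complex.I * symB u (conjB u)
        = ((2 * Complex.normSq (u.2 0)
            - 2 * ∑ i : Fin h, Complex.normSq (u.2 i.succ) : ℝ) : ℂ) := by
      simp only [symB, conjB, h1, Pi.zero_apply, map_zero, mul_zero, zero_mul,
        zero_sub, Complex.mul_conj, Finset.sum_neg_distrib]
      push_cast
      linear_combination (-2 * (Complex.normSq (u.2 0) : ℂ)
        + 2 * ∑ i : Fin h, (Complex.normSq (u.2 i.succ) : ℂ)) * Complex.I_sq
    refine ⟨2 * Complex.normSq (u.2 0)
        - 2 * ∑ i : Fin h, Complex.normSq (u.2 i.succ), ?_, hself⟩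
    have hA : 0 ≤ ∑ i : Fin h, Complex.normSq (u.2 i.succ) :=
      Finset.sum_nonneg fun i _ => Complex.normSq_nonneg _
    rcases eq_or_lt_of_le hA with hA0 | hApos
    · exfalso
      have hz : ∀ i : Fin h, u.2 i.succ = 0 := by
        intro i
        have := (Finset.sum_eq_zero_iff_of_nonneg
          (fun i _ => Complex.normSq_nonneg (u.2 i.succ))).1 hA0.symm i (Finset.mem_univ i)
        exact Complex.normSq_eq_zero.1 this
      have hw0 : u.2 0 = 0 := by
        rw [hperp']
        exact Finset.sum_eq_zero fun i _ => by rw [hz i, zero_mul]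
      apply hu0
      have hw : u.2 = 0 := by
        funext j
        refine Fin.cases ?_ ?_ j
        · exact hw0
        · exact hz
      exact Prod.ext h1 hw
    · have hcs : Complex.normSq (u.2 0)
          ≤ (∑ i : Fin h, Complex.normSq (u.2 i.succ)) * ∑ i, Complex.normSq (z i) := by
        rw [hperp']
        have h1' : ‖(∑ i : Fin h, u.2 i.succ * (starRingEnd ℂ) (z i))‖
            ≤ ∑ i : Fin h, ‖(u.2 i.succ)‖ * ‖(z i)‖ := by
          refine le_trans (norm_sum_le _ _) ?_
          refine le_of_eq (Finset.sum_congr rfl fun i _ => ?_)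
          simp [norm_mul, Complex.norm_conj]
        have h2' := Finset.sum_mul_sq_le_sq_mul_sq Finset.univ
          (fun i : Fin h => ‖(u.2 i.succ)‖) (fun i => ‖(z i)‖)
        calc Complex.normSq (∑ i : Fin h, u.2 i.succ * (starRingEnd ℂ) (z i))
            = ‖(∑ i : Fin h, u.2 i.succ * (starRingEnd ℂ) (z i))‖ ^ 2 := by
              rw [Complex.sq_norm]
          _ ≤ (∑ i : Fin h, ‖(u.2 i.succ)‖ * ‖(z i)‖) ^ 2 :=
              pow_le_pow_left₀ (norm_nonneg _) h1' 2
          _ ≤ (∑ i : Fin h, ‖(u.2 i.succ)‖ ^ 2)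
                * ∑ i : Fin h, ‖(z i)‖ ^ 2 := h2'
          _ = _ := by simp [Complex.sq_norm]
      have hlt : Complex.normSq (u.2 0) < ∑ i : Fin h, Complex.normSq (u.2 i.succ) := by
        calc Complex.normSq (u.2 0) ≤ _ := hcs
          _ < (∑ i : Fin h, Complex.normSq (u.2 i.succ)) * 1 :=
              mul_lt_mul_of_pos_left hS hApos
          _ = _ := mul_one _
      linarith
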